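/- Let N > 1 and n ≤ N and K ≥ 1 be integers, and let γ_1, …, γ_N ∈ ℂ^n and α_1, …, α_K ∈ ℂ^n encode a separable sensing scenario. Assume: (i) for every i ∈ {1, …, n} there exists k with α_k(i) ≠ 0 (i-radiativity); and (ii) there exist pairwise distinct indices j_1, …, j_n ∈ {1, …, N} such that for every i ∈ {1, …, n} and every ℓ ≠ j_i, |γ_{j_i}(i)| > (N − 1)·|γ_ℓ(i)| (strong i-dominance for each i, with pairwise distinct dominant sensors, as selected in the paper's proof). Define w_{j,k} ∈ ℂ^n by w_{j,k}(i) = |γ_j(i)|·|α_k(i)| for i = 1, …, n (the images of the magnitude sum frame mapping). Then the family { w_{j,k} : 1 ≤ j ≤ N, 1 ≤ k ≤ K } spans ℂ^n and hence is a multiplicative frame for ℂ^n. -/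

import Mathlib

/-- Theorem (Strong dominance and multiplicative frames):
Let `N > 1`, `n ≤ N`, `K ≥ 1`, and let `γ₁, …, γ_N ∈ ℂⁿ` and
`α₁, …, α_K ∈ ℂⁿ` encode a separable sensing scenario. Assume:
(i) `i`-radiativity for every `i` (`∃ k, α k i ≠ 0`); and
(ii) there are pairwise distinct indices `j_1, …, j_n` with
`|γ (j i) i| > (N - 1) · |γ ℓ i|` for every `i` and every `ℓ ≠ j i`
(strong `i`-dominance with pairwise distinct dominant sensors).
Let `w j k` be the images of the magnitude sum frame mapping,
`w j k i = |γ j i| · |α k i|`. Then `{ w j k : j, k }` spans `ℂⁿ` and hence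
is a multiplicative frame for `ℂⁿ`. -/
theorem strong_dominance_multiplicative_frame
    (n N K : ℕ) (hN1 : 1 < N) (hnN : n ≤ N) (hK : 1 ≤ K)
    (γ : Fin N → Fin n → ℂ) (α : Fin K → Fin n → ℂ)
    (hrad : ∀ i : Fin n, ∃ k : Fin K, α k i ≠ 0)
    (hdom : ∃ jsel : Fin n → Fin N, Function.Injective jsel ∧
      ∀ i : Fin n, ∀ ℓ : Fin N, ℓ ≠ jsel i →
        ((N : ℝ) - 1) * ‖γ ℓ i‖ < ‖γ (jsel i) i‖)
    (w : Fin N → Fin K → (Fin n → ℂ))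
    (hw : ∀ j k i, w j k i =
      ((‖γ j i‖ * ‖α k i‖ : ℝ) : ℂ)) :
    Submodule.span ℂ (Set.range fun p : Fin N × Fin K => w p.1 p.2) = ⊤ := by
  classical
  obtain ⟨jsel, hinj, hd⟩ := hdom
  by_contra hne
  obtain ⟨f, hf0, hker⟩ :=
    Submodule.exists_dual_map_eq_bot_of_lt_top (p := Submodule.span ℂ
      (Set.range fun p : Fin N × Fin K => w p.1 p.2)) (lt_top_iff_ne_top.2 hne) inferInstance
  set c : Fin n → ℂ := fun i => f (Pi.single i 1) with hc
  have hfv : ∀ v : Fin n → ℂ, f v = ∑ i, v i * c i := by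
    intro v
    have h1 : v = ∑ i, Pi.single i (v i) := by
      simp [Finset.univ_sum_single]
    conv_lhs => rw [h1]
    rw [map_sum]
    refine Finset.sum_congr rfl fun i _ => ?_
    have h2 : Pi.single i (v i) = v i • (Pi.single i 1 : Fin n → ℂ) := by
      rw [← Pi.single_smul, smul_eq_mul, mul_one]
    rw [h2, map_smul, smul_eq_mul, hc]
  have hfw : ∀ j k, f (w j k) = 0 := by
    intro j k
    have hmem : w j k ∈ Submodule.span ℂ
        (Set.range fun p : Fin N × Fin K => w p.1 p.2) :=
      Submodule.subset_span ⟨(j, k), rfl⟩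
    have : f (w j k) ∈ (⊥ : Submodule ℂ ℂ) := hker ▸ Submodule.mem_map_of_mem hmem
    simpa using this
  obtain ⟨i0, hi0⟩ : ∃ i0, c i0 ≠ 0 := by
    by_contra h
    push_neg at h
    exact hf0 (LinearMap.ext fun v => by simp [hfv, h])
  obtain ⟨k, hk⟩ := hrad i0
  have hNpos : (0 : ℝ) < (N : ℝ) - 1 := by
    have : (1 : ℝ) < (N : ℝ) := by exact_mod_cast hN1
    linarith
  have hdiagpos : ∀ i, 0 < ‖γ (jsel i) i‖ := by
    intro i
    have : Nontrivial (Fin N) := Fin.nontrivial_iff_two_le.mpr hN1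
    obtain ⟨ℓ, hℓ⟩ := exists_ne (jsel i)
    have h2 := hd i ℓ hℓ
    have h1 : (0 : ℝ) ≤ ((N : ℝ) - 1) * ‖γ ℓ i‖ :=
      mul_nonneg hNpos.le (norm_nonneg _)
    linarith
  -- the complex dominance matrix
  set B : Matrix (Fin n) (Fin n) ℂ :=
    fun i i' => ((‖γ (jsel i') i‖ : ℝ) : ℂ) with hB
  have hnorm : ∀ i i', ‖B i i'‖ = ‖γ (jsel i') i‖ := by
    intro i i'
    rw [hB]
    simp [Complex.norm_real, Real.norm_eq_abs, abs_of_nonneg (norm_nonneg _)]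
  have hrow : ∀ i : Fin n, ∑ i' ∈ Finset.univ.erase i, ‖B i i'‖ < ‖B i i‖ := by
    intro i
    set D := ‖γ (jsel i) i‖ with hD
    have hDpos : 0 < D := hdiagpos i
    have hBii : ‖B i i‖ = D := hnorm i i
    rw [hBii]
    have hterm : ∀ i' ∈ Finset.univ.erase i, ‖B i i'‖ < D / ((N : ℝ) - 1) := by
      intro i' hi'
      have hne : i' ≠ i := Finset.ne_of_mem_erase hi'
      have hjne : jsel i' ≠ jsel i := fun h => hne (hinj h)
      have h2 := hd i (jsel i') hjne
      rw [hnorm, lt_div_iff₀ hNpos]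
      linarith
    rcases Finset.eq_empty_or_nonempty (Finset.univ.erase i) with he | he
    · rw [he, Finset.sum_empty]
      exact hDpos
    · have hcard : (Finset.univ.erase i).card = n - 1 := by
        simp [Finset.card_erase_of_mem]
      have hcardle : ((Finset.univ.erase i).card : ℝ) ≤ (N : ℝ) - 1 := by
        rw [hcard]
        have h3 : (n - 1 : ℕ) ≤ N - 1 := Nat.sub_le_sub_right hnN 1
        calc ((n - 1 : ℕ) : ℝ) ≤ ((N - 1 : ℕ) : ℝ) := by exact_mod_cast h3
          _ = (N : ℝ) - 1 := by rw [Nat.cast_sub hN1.le]; norm_num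
      calc ∑ i' ∈ Finset.univ.erase i, ‖B i i'‖
          < ∑ _i' ∈ Finset.univ.erase i, D / ((N : ℝ) - 1) :=
            Finset.sum_lt_sum_of_nonempty he hterm
        _ = ((Finset.univ.erase i).card : ℝ) * (D / ((N : ℝ) - 1)) := by
            rw [Finset.sum_const, nsmul_eq_mul]
        _ ≤ ((N : ℝ) - 1) * (D / ((N : ℝ) - 1)) :=
            mul_le_mul_of_nonneg_right hcardle (by positivity)
        _ = D := by field_simp
  have hdetB : B.det ≠ 0 := det_ne_zero_of_sum_row_lt_diag hrow
  set c' : Fin n → ℂ := fun i => c i * (‖α k i‖ : ℂ) with hc'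
  have hvm : Matrix.vecMul c' B = 0 := by
    funext i'
    have h4 := hfw (jsel i') k
    rw [hfv] at h4
    simp only [Matrix.vecMul, dotProduct, hc', hB, Pi.zero_apply]
    rw [← h4]
    refine Finset.sum_congr rfl fun i _ => ?_
    rw [hw]
    push_cast
    ring
  have hBinv : B * B⁻¹ = 1 := Matrix.mul_nonsing_inv B (isUnit_iff_ne_zero.2 hdetB)
  have hc'0 : c' = 0 := by
    have h1 : Matrix.vecMul (Matrix.vecMul c' B) B⁻¹ = 0 := by rw [hvm, Matrix.zero_vecMul]
    rwa [Matrix.vecMul_vecMul, hBinv, Matrix.vecMul_one] at h1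
  have h5 : c' i0 = 0 := by rw [hc'0]; rfl
  rw [hc'] at h5
  have habs : (‖α k i0‖ : ℂ) ≠ 0 := by
    exact_mod_cast Complex.ofReal_ne_zero.2 (norm_ne_zero_iff.2 hk)
  rcases mul_eq_zero.1 h5 with h | h
  · exact hi0 h
  · exact habs h
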